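/- Let F be a C³ function on an open set U ⊂ ℝ² with ∇F ≠ 0 on U, define H(F) = F_{xx}F_y² − 2F_{xy}F_xF_y + F_{yy}F_x², and let v = (F_y, −F_x) be the Hamiltonian (tangent) vector field of F. Then the directional derivative of the function H(F) + β|∇F|³ along v equals (F_{xxx}F_y³ − 3F_{xxy}F_y²F_x + 3F_{xyy}F_yF_x² − F_{yyy}F_x³) + 3β|∇F|(F_{xx}F_xF_y + F_{xy}(F_y² − F_x²) − F_{yy}F_xF_y). -/

import Mathlib

open Filter Topology

noncomputable def Dv (v : ℝ × ℝ) (g : ℝ × ℝ → ℝ) : ℝ × ℝ → ℝ := fun p => fderiv ℝ g p v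

lemma sliceD1 {g : ℝ × ℝ → ℝ} {q : ℝ × ℝ} (hg : DifferentiableAt ℝ g q) :
    HasDerivAt (fun t => g (t, q.2)) (Dv (1, 0) g q) q.1 := by
  have h : HasDerivAt (fun t : ℝ => ((t, q.2) : ℝ × ℝ)) ((1 : ℝ), (0 : ℝ)) q.1 :=
    (hasDerivAt_id _).prodMk (hasDerivAt_const _ _)
  exact hg.hasFDerivAt.comp_hasDerivAt q.1 h

lemma sliceD2 {g : ℝ × ℝ → ℝ} {q : ℝ × ℝ} (hg : DifferentiableAt ℝ g q) :
    HasDerivAt (fun t => g (q.1, t)) (Dv (0, 1) g q) q.2 := by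
  have h : HasDerivAt (fun t : ℝ => ((q.1, t) : ℝ × ℝ)) ((0 : ℝ), (1 : ℝ)) q.2 :=
    (hasDerivAt_const _ _).prodMk (hasDerivAt_id _)
  exact hg.hasFDerivAt.comp_hasDerivAt q.2 h

lemma contDiffOn_Dv {g : ℝ × ℝ → ℝ} {U : Set (ℝ × ℝ)} {m n : WithTop ℕ∞} (v : ℝ × ℝ) (hU : IsOpen U)
    (hg : ContDiffOn ℝ n g U) (h : m + 1 ≤ n) : ContDiffOn ℝ m (Dv v g) U :=
  (ContinuousLinearMap.apply ℝ ℝ v).contDiff.comp_contDiffOn (hg.fderiv_of_isOpen hU h)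

lemma fderiv_Dv {g : ℝ × ℝ → ℝ} {p : ℝ × ℝ} (v : ℝ × ℝ)
    (hg : DifferentiableAt ℝ (fderiv ℝ g) p) (w : ℝ × ℝ) :
    fderiv ℝ (Dv v g) p w = fderiv ℝ (fderiv ℝ g) p w v := by
  have h : HasFDerivAt (Dv v g)
      ((ContinuousLinearMap.apply ℝ ℝ v).comp (fderiv ℝ (fderiv ℝ g) p)) p :=
    (ContinuousLinearMap.apply ℝ ℝ v).hasFDerivAt.comp p hg.hasFDerivAt
  rw [h.fderiv]; rfl

lemma sym_Dv {g : ℝ × ℝ → ℝ} {U : Set (ℝ × ℝ)} (hU : IsOpen U) (hg : ContDiffOn ℝ 2 g U)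
    {p : ℝ × ℝ} (hp : p ∈ U) (v w : ℝ × ℝ) :
    Dv v (Dv w g) p = Dv w (Dv v g) p := by
  have hd : ∀ᶠ q in 𝓝 p, HasFDerivAt g (fderiv ℝ g q) q := by
    filter_upwards [hU.mem_nhds hp] with q hq
    exact ((hg.differentiableOn (by norm_num)).differentiableAt (hU.mem_nhds hq)).hasFDerivAt
  have hfd : DifferentiableAt ℝ (fderiv ℝ g) p :=
    ((hg.fderiv_of_isOpen hU (by norm_num : (1:WithTop ℕ∞) + 1 ≤ 2)).differentiableOn
      (by norm_num)).differentiableAt (hU.mem_nhds hp)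
  have hsym := second_derivative_symmetric_of_eventually hd hfd.hasFDerivAt v w
  show fderiv ℝ (Dv w g) p v = fderiv ℝ (Dv v g) p w
  rw [fderiv_Dv w hfd, fderiv_Dv v hfd]
  exact hsym

/-- Partial derivative in the first variable. -/
noncomputable def pd1 (F : ℝ → ℝ → ℝ) : ℝ → ℝ → ℝ := fun x y => deriv (fun t => F t y) x

/-- Partial derivative in the second variable. -/
noncomputable def pd2 (F : ℝ → ℝ → ℝ) : ℝ → ℝ → ℝ := fun x y => deriv (fun t => F x t) y

/-- The Hessian form `H(F) = F_xx F_y² - 2 F_xy F_x F_y + F_yy F_x²`. -/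
noncomputable def Hess (F : ℝ → ℝ → ℝ) : ℝ → ℝ → ℝ := fun x y =>
  pd1 (pd1 F) x y * (pd2 F x y)^2 - 2 * pd2 (pd1 F) x y * pd1 F x y * pd2 F x y
    + pd2 (pd2 F) x y * (pd1 F x y)^2

/-- the derivative of `H(F) + β|∇F|³` along the Hamiltonian vector
field `v = (F_y, -F_x)` equals the third-order expression appearing as the `ε³`
coefficient of the billiard invariance relation. -/
theorem stmt_10 (U : Set (ℝ × ℝ)) (hU : IsOpen U)
    (F : ℝ → ℝ → ℝ) (hF : ContDiffOn ℝ 3 (Function.uncurry F) U)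
    (hgrad : ∀ p ∈ U, (pd1 F p.1 p.2, pd2 F p.1 p.2) ≠ (0, 0))
    (β : ℝ) :
    ∀ p ∈ U,
      pd2 F p.1 p.2 *
          pd1 (fun x y => Hess F x y + β * Real.sqrt ((pd1 F x y)^2 + (pd2 F x y)^2) ^ 3) p.1 p.2
        - pd1 F p.1 p.2 *
          pd2 (fun x y => Hess F x y + β * Real.sqrt ((pd1 F x y)^2 + (pd2 F x y)^2) ^ 3) p.1 p.2
      = (pd1 (pd1 (pd1 F)) p.1 p.2 * (pd2 F p.1 p.2)^3
          - 3 * pd2 (pd1 (pd1 F)) p.1 p.2 * (pd2 F p.1 p.2)^2 * pd1 F p.1 p.2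
          + 3 * pd2 (pd2 (pd1 F)) p.1 p.2 * pd2 F p.1 p.2 * (pd1 F p.1 p.2)^2
          - pd2 (pd2 (pd2 F)) p.1 p.2 * (pd1 F p.1 p.2)^3)
        + 3 * β * Real.sqrt ((pd1 F p.1 p.2)^2 + (pd2 F p.1 p.2)^2) *
            (pd1 (pd1 F) p.1 p.2 * pd1 F p.1 p.2 * pd2 F p.1 p.2
              + pd2 (pd1 F) p.1 p.2 * ((pd2 F p.1 p.2)^2 - (pd1 F p.1 p.2)^2)
              - pd2 (pd2 F) p.1 p.2 * pd1 F p.1 p.2 * pd2 F p.1 p.2) := by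
  intro p hp
  set G := Function.uncurry F with hGdef
  have h2G : ContDiffOn ℝ 2 G U := hF.of_le (by norm_num)
  have hD1 : ContDiffOn ℝ 2 (Dv (1,0) G) U := contDiffOn_Dv _ hU hF (by norm_num)
  have hD2 : ContDiffOn ℝ 2 (Dv (0,1) G) U := contDiffOn_Dv _ hU hF (by norm_num)
  have hD11 : ContDiffOn ℝ 1 (Dv (1,0) (Dv (1,0) G)) U := contDiffOn_Dv _ hU hD1 (by norm_num)
  have hD21 : ContDiffOn ℝ 1 (Dv (0,1) (Dv (1,0) G)) U := contDiffOn_Dv _ hU hD1 (by norm_num)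
  have hD22 : ContDiffOn ℝ 1 (Dv (0,1) (Dv (0,1) G)) U := contDiffOn_Dv _ hU hD2 (by norm_num)
  have diffAt : ∀ (g : ℝ × ℝ → ℝ), ContDiffOn ℝ 1 g U → ∀ q ∈ U, DifferentiableAt ℝ g q :=
    fun g hg q hq => (hg.differentiableOn (by norm_num)).differentiableAt (hU.mem_nhds hq)
  have hev1 : ∀ (x y : ℝ), (x, y) ∈ U → ∀ᶠ t in nhds x, ((t, y) : ℝ × ℝ) ∈ U := fun x y hq =>
    (continuous_id.prodMk continuous_const).continuousAt.preimage_mem_nhds (hU.mem_nhds hq)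
  have hev2 : ∀ (x y : ℝ), (x, y) ∈ U → ∀ᶠ t in nhds y, ((x, t) : ℝ × ℝ) ∈ U := fun x y hq =>
    (continuous_const.prodMk continuous_id).continuousAt.preimage_mem_nhds (hU.mem_nhds hq)
  have hpd1 : ∀ (x y : ℝ), (x, y) ∈ U → pd1 F x y = Dv (1,0) G (x, y) := fun x y hq =>
    (sliceD1 (diffAt G (hF.of_le (by norm_num)) (x, y) hq)).deriv
  have hpd2 : ∀ (x y : ℝ), (x, y) ∈ U → pd2 F x y = Dv (0,1) G (x, y) := fun x y hq =>
    (sliceD2 (diffAt G (hF.of_le (by norm_num)) (x, y) hq)).deriv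
  have key2 : ∀ (g : ℝ × ℝ → ℝ) (pg : ℝ → ℝ → ℝ),
      (∀ (x y : ℝ), (x, y) ∈ U → pg x y = g (x, y)) → ContDiffOn ℝ 1 g U →
      ∀ (x y : ℝ), (x, y) ∈ U →
        deriv (fun t => pg t y) x = Dv (1,0) g (x, y) ∧
        deriv (fun t => pg x t) y = Dv (0,1) g (x, y) := by
    intro g pg hpg hg x y hq
    constructor
    · have hev : (fun t => pg t y) =ᶠ[nhds x] (fun t => g (t, y)) := by
        filter_upwards [hev1 x y hq] with t ht using hpg t y ht
      rw [hev.deriv_eq]; exact (sliceD1 (diffAt g hg (x, y) hq)).deriv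
    · have hev : (fun t => pg x t) =ᶠ[nhds y] (fun t => g (x, t)) := by
        filter_upwards [hev2 x y hq] with t ht using hpg x t ht
      rw [hev.deriv_eq]; exact (sliceD2 (diffAt g hg (x, y) hq)).deriv
  have hpd11 : ∀ (x y : ℝ), (x, y) ∈ U → pd1 (pd1 F) x y = Dv (1,0) (Dv (1,0) G) (x, y) :=
    fun x y hq => (key2 _ _ hpd1 (hD1.of_le (by norm_num)) x y hq).1
  have hpd21 : ∀ (x y : ℝ), (x, y) ∈ U → pd2 (pd1 F) x y = Dv (0,1) (Dv (1,0) G) (x, y) :=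
    fun x y hq => (key2 _ _ hpd1 (hD1.of_le (by norm_num)) x y hq).2
  have hpd22 : ∀ (x y : ℝ), (x, y) ∈ U → pd2 (pd2 F) x y = Dv (0,1) (Dv (0,1) G) (x, y) :=
    fun x y hq => (key2 _ _ hpd2 (hD2.of_le (by norm_num)) x y hq).2
  have hpd111 : ∀ (x y : ℝ), (x, y) ∈ U →
      pd1 (pd1 (pd1 F)) x y = Dv (1,0) (Dv (1,0) (Dv (1,0) G)) (x, y) :=
    fun x y hq => (key2 _ _ hpd11 hD11 x y hq).1
  have hpd211 : ∀ (x y : ℝ), (x, y) ∈ U →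
      pd2 (pd1 (pd1 F)) x y = Dv (0,1) (Dv (1,0) (Dv (1,0) G)) (x, y) :=
    fun x y hq => (key2 _ _ hpd11 hD11 x y hq).2
  have hpd221 : ∀ (x y : ℝ), (x, y) ∈ U →
      pd2 (pd2 (pd1 F)) x y = Dv (0,1) (Dv (0,1) (Dv (1,0) G)) (x, y) :=
    fun x y hq => (key2 _ _ hpd21 hD21 x y hq).2
  have hpd222 : ∀ (x y : ℝ), (x, y) ∈ U →
      pd2 (pd2 (pd2 F)) x y = Dv (0,1) (Dv (0,1) (Dv (0,1) G)) (x, y) :=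
    fun x y hq => (key2 _ _ hpd22 hD22 x y hq).2
  -- symmetry facts
  have hsymBA : ∀ q ∈ U, Dv (1,0) (Dv (0,1) G) q = Dv (0,1) (Dv (1,0) G) q :=
    fun q hq => sym_Dv hU h2G hq _ _
  have hsym121 : Dv (1,0) (Dv (0,1) (Dv (1,0) G)) p = Dv (0,1) (Dv (1,0) (Dv (1,0) G)) p :=
    sym_Dv hU hD1 hp _ _
  have hsym122 : Dv (1,0) (Dv (0,1) (Dv (0,1) G)) p = Dv (0,1) (Dv (0,1) (Dv (1,0) G)) p := by
    have h1 : Dv (1,0) (Dv (0,1) (Dv (0,1) G)) p = Dv (0,1) (Dv (1,0) (Dv (0,1) G)) p :=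
      sym_Dv hU hD2 hp _ _
    have hev : Dv (1,0) (Dv (0,1) G) =ᶠ[nhds p] Dv (0,1) (Dv (1,0) G) := by
      filter_upwards [hU.mem_nhds hp] with q hq using hsymBA q hq
    have h2 : Dv (0,1) (Dv (1,0) (Dv (0,1) G)) p = Dv (0,1) (Dv (0,1) (Dv (1,0) G)) p := by
      show fderiv ℝ _ p (0,1) = fderiv ℝ _ p (0,1)
      rw [hev.fderiv_eq]
    exact h1.trans h2
  -- positivity of |∇F|²
  have hgrad' := hgrad p hp
  rw [ne_eq, Prod.mk.injEq, not_and_or, hpd1 p.1 p.2 hp, hpd2 p.1 p.2 hp] at hgrad'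
  simp only [Prod.mk.eta] at hgrad'
  have hqpos : 0 < (Dv (1,0) G p)^2 + (Dv (0,1) G p)^2 := by
    rcases hgrad' with h | h
    · exact add_pos_of_pos_of_nonneg (pow_two_pos_of_ne_zero h) (sq_nonneg _)
    · exact add_pos_of_nonneg_of_pos (sq_nonneg _) (pow_two_pos_of_ne_zero h)
  -- differentiability at p
  have dG1 := diffAt _ (hD1.of_le (by norm_num)) p hp
  have dG2 := diffAt _ (hD2.of_le (by norm_num)) p hp
  have dG11 := diffAt _ hD11 p hp
  have dG21 := diffAt _ hD21 p hp
  have dG22 := diffAt _ hD22 p hp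
  -- x-direction
  have h1x := sliceD1 dG1
  have h2x := sliceD1 dG2
  have hAx := sliceD1 dG11
  have hBx := sliceD1 dG21
  have hCx := sliceD1 dG22
  have hqx := (h1x.pow 2).add (h2x.pow 2)
  have hsx := hqx.sqrt (ne_of_gt hqpos)
  have hfullx := (((hAx.mul (h2x.pow 2)).sub (((hBx.const_mul 2).mul h1x).mul h2x)).add
      (hCx.mul (h1x.pow 2))).add ((hsx.pow 3).const_mul β)
  have hΦx : (fun t => Hess F t p.2 + β * Real.sqrt ((pd1 F t p.2)^2 + (pd2 F t p.2)^2) ^ 3)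
      =ᶠ[nhds p.1] (fun t => (Dv (1,0) (Dv (1,0) G) (t, p.2) * (Dv (0,1) G (t, p.2))^2
        - 2 * Dv (0,1) (Dv (1,0) G) (t, p.2) * Dv (1,0) G (t, p.2) * Dv (0,1) G (t, p.2)
        + Dv (0,1) (Dv (0,1) G) (t, p.2) * (Dv (1,0) G (t, p.2))^2)
        + β * Real.sqrt ((Dv (1,0) G (t, p.2))^2 + (Dv (0,1) G (t, p.2))^2) ^ 3) := by
    filter_upwards [hev1 p.1 p.2 hp] with t ht
    simp only [Hess, hpd11 t p.2 ht, hpd21 t p.2 ht, hpd22 t p.2 ht, hpd1 t p.2 ht,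
      hpd2 t p.2 ht]
  have hLx := hΦx.deriv_eq.trans hfullx.deriv
  -- y-direction
  have h1y := sliceD2 dG1
  have h2y := sliceD2 dG2
  have hAy := sliceD2 dG11
  have hBy := sliceD2 dG21
  have hCy := sliceD2 dG22
  have hqy := (h1y.pow 2).add (h2y.pow 2)
  have hsy := hqy.sqrt (ne_of_gt hqpos)
  have hfully := (((hAy.mul (h2y.pow 2)).sub (((hBy.const_mul 2).mul h1y).mul h2y)).add
      (hCy.mul (h1y.pow 2))).add ((hsy.pow 3).const_mul β)
  have hΦy : (fun t => Hess F p.1 t + β * Real.sqrt ((pd1 F p.1 t)^2 + (pd2 F p.1 t)^2) ^ 3)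
      =ᶠ[nhds p.2] (fun t => (Dv (1,0) (Dv (1,0) G) (p.1, t) * (Dv (0,1) G (p.1, t))^2
        - 2 * Dv (0,1) (Dv (1,0) G) (p.1, t) * Dv (1,0) G (p.1, t) * Dv (0,1) G (p.1, t)
        + Dv (0,1) (Dv (0,1) G) (p.1, t) * (Dv (1,0) G (p.1, t))^2)
        + β * Real.sqrt ((Dv (1,0) G (p.1, t))^2 + (Dv (0,1) G (p.1, t))^2) ^ 3) := by
    filter_upwards [hev2 p.1 p.2 hp] with t ht
    simp only [Hess, hpd11 p.1 t ht, hpd21 p.1 t ht, hpd22 p.1 t ht, hpd1 p.1 t ht,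
      hpd2 p.1 t ht]
  have hLy := hΦy.deriv_eq.trans hfully.deriv
  rw [show pd1 (fun x y => Hess F x y + β * Real.sqrt ((pd1 F x y)^2 + (pd2 F x y)^2) ^ 3) p.1 p.2
      = deriv (fun t => Hess F t p.2 + β * Real.sqrt ((pd1 F t p.2)^2 + (pd2 F t p.2)^2) ^ 3) p.1
      from rfl, hLx,
    show pd2 (fun x y => Hess F x y + β * Real.sqrt ((pd1 F x y)^2 + (pd2 F x y)^2) ^ 3) p.1 p.2
      = deriv (fun t => Hess F p.1 t + β * Real.sqrt ((pd1 F p.1 t)^2 + (pd2 F p.1 t)^2) ^ 3) p.2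
      from rfl, hLy,
    hpd111 p.1 p.2 hp, hpd211 p.1 p.2 hp, hpd221 p.1 p.2 hp, hpd222 p.1 p.2 hp,
    hpd11 p.1 p.2 hp, hpd21 p.1 p.2 hp, hpd22 p.1 p.2 hp, hpd1 p.1 p.2 hp, hpd2 p.1 p.2 hp]
  simp only [Prod.mk.eta, Pi.pow_apply, Pi.add_apply, Pi.mul_apply]
  rw [hsym121, hsym122, hsymBA p hp]
  set s := Real.sqrt ((Dv (1,0) G p)^2 + (Dv (0,1) G p)^2) with hsdef
  have hs0 : s ≠ 0 := ne_of_gt (Real.sqrt_pos.mpr hqpos)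
  have hdiv : ∀ X : ℝ, ((3:ℕ) : ℝ) * s ^ (3-1) * (X / (2 * s)) = 3/2 * X * s := by
    intro X; field_simp; ring
  rw [hdiv, hdiv]
  ring
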